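/- Let a, c < 0. For every μ > 0, the infimum m(μ) of τ(f,g) = -a∫(f')² - c∫(g')² + ∫f²g + 2∫fg over pairs (f,g) ∈ H¹(ℝ)×H¹(ℝ) with ‖f‖₂² + ‖g‖₂² = μ satisfies m(μ) < -C μ^{5/3} / (|a|+|c|)^{1/3} for some positive constant C independent of a, c, μ. -/

import Mathlib

open MeasureTheory Real


lemma sq_le_int (f f' : ℝ → ℝ)
    (hd : ∀ x, HasDerivAt f (f' x) x)
    (hf : Integrable (fun x => (f x) ^ 2))
    (hf' : Integrable (fun x => (f' x) ^ 2)) (x : ℝ) :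
    (f x) ^ 2 ≤ (∫ y, (f y) ^ 2) + (∫ y, (f' y) ^ 2) := by
  have hfc : Continuous f := by
    rw [continuous_iff_continuousAt]; exact fun y => (hd y).continuousAt
  have hf'eq : f' = deriv f := funext fun y => ((hd y).deriv).symm
  have hf'm : Measurable f' := hf'eq ▸ measurable_deriv f
  set h' : ℝ → ℝ := fun y => 2 * f y * f' y with hh'
  have hptw : ∀ y, |h' y| ≤ (f y) ^ 2 + (f' y) ^ 2 := by
    intro y
    have := sq_nonneg (|f y| - |f' y|)
    have h1 : |h' y| = 2 * |f y| * |f' y| := by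
      simp only [hh', abs_mul, abs_two]
    rw [h1, sub_sq] at *
    nlinarith [sq_abs (f y), sq_abs (f' y)]
  have hint : Integrable h' := by
    refine (hf.add hf').mono' ?_ (Filter.Eventually.of_forall hptw)
    exact ((continuous_const.mul hfc).aestronglyMeasurable.mul hf'm.aestronglyMeasurable)
  have habs : Integrable (fun y => |h' y|) := hint.abs
  have hftc : ∀ y : ℝ, f x ^ 2 ≤ f y ^ 2 + ∫ z, |h' z| := by
    intro y
    have h1 : ∫ z in y..x, h' z = f x ^ 2 - f y ^ 2 := by
      apply intervalIntegral.integral_eq_sub_of_hasDerivAt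
      · intro z _
        have h2 := (hd z).mul (hd z)
        have h3 : h' z = f' z * f z + f z * f' z := by simp only [hh']; ring
        rw [h3]
        simpa only [pow_two, Pi.mul_def] using h2
      · exact hint.intervalIntegrable
    have h2 : |∫ z in y..x, h' z| ≤ ∫ z, |h' z| := by
      rcases le_total y x with hyx | hyx
      · refine le_trans (intervalIntegral.abs_integral_le_integral_abs hyx) ?_
        rw [intervalIntegral.integral_of_le hyx]
        exact setIntegral_le_integral habs
          (Filter.Eventually.of_forall fun z => abs_nonneg _)
      · rw [intervalIntegral.integral_symm, abs_neg]
        refine le_trans (intervalIntegral.abs_integral_le_integral_abs hyx) ?_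
        rw [intervalIntegral.integral_of_le hyx]
        exact setIntegral_le_integral habs
          (Filter.Eventually.of_forall fun z => abs_nonneg _)
    nlinarith [le_abs_self (∫ z in y..x, h' z), h1]
  have hsmall : ∀ ε : ℝ, 0 < ε → ∃ y, f y ^ 2 < ε := by
    intro ε hε
    by_contra hcon
    push_neg at hcon
    have : Integrable (fun _ : ℝ => ε) := by
      refine hf.mono' aestronglyMeasurable_const
        (Filter.Eventually.of_forall fun y => ?_)
      rw [Real.norm_eq_abs, abs_of_pos hε]; exact hcon y
    rw [integrable_const_iff] at this
    rcases this with h | h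
    · exact hε.ne' h
    · haveI := h; exact measure_ne_top (volume : Measure ℝ) Set.univ Real.volume_univ
  have hmain : f x ^ 2 ≤ ∫ z, |h' z| := by
    refine le_of_forall_pos_le_add fun ε hε => ?_
    obtain ⟨y, hy⟩ := hsmall ε hε
    linarith [hftc y]
  calc f x ^ 2 ≤ ∫ z, |h' z| := hmain
    _ ≤ ∫ z, ((f z) ^ 2 + (f' z) ^ 2) :=
        integral_mono habs (hf.add hf') hptw
    _ = (∫ y, f y ^ 2) + ∫ y, f' y ^ 2 := integral_add hf hf'

lemma tau_lower (a c μ : ℝ) (ha : a < 0) (hc : c < 0) (hμ : 0 < μ)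
    (f f' g g' : ℝ → ℝ)
    (hdf : ∀ x, HasDerivAt f (f' x) x)
    (hif : Integrable (fun x => (f x)^2)) (hif' : Integrable (fun x => (f' x)^2))
    (hig : Integrable (fun x => (g x)^2)) (hig' : Integrable (fun x => (g' x)^2))
    (hifg2 : Integrable (fun x => (f x)^2 * g x)) (hifg : Integrable (fun x => f x * g x))
    (hcon : (∫ x, (f x)^2) + (∫ x, (g x)^2) = μ) :
    -((-a)*μ + μ^2/(4*(-a)) + μ) ≤
      -a * (∫ x, (f' x)^2) - c * (∫ x, (g' x)^2)
        + (∫ x, (f x)^2 * g x) + 2 * (∫ x, f x * g x) := by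
  have hfK : ∀ x, (f x)^2 ≤ (∫ y, (f y)^2) + (∫ y, (f' y)^2) :=
    fun x => sq_le_int f f' hdf hif hif' x
  set If := ∫ x, (f' x)^2 with hIf
  set Ig := ∫ x, (g' x)^2 with hIg
  set μf := ∫ x, (f x)^2 with hμf
  set μg := ∫ x, (g x)^2 with hμg
  set P := ∫ x, (f x)^2 * g x with hP
  set Q := ∫ x, f x * g x with hQ
  have hIf0 : 0 ≤ If := hIf ▸ integral_nonneg fun x => sq_nonneg _
  have hIg0 : 0 ≤ Ig := hIg ▸ integral_nonneg fun x => sq_nonneg _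
  have hμf0 : 0 ≤ μf := hμf ▸ integral_nonneg fun x => sq_nonneg _
  have hμg0 : 0 ≤ μg := hμg ▸ integral_nonneg fun x => sq_nonneg _
  set K := μf + If with hK
  set t : ℝ := -2*a/μ with ht
  have ht0 : 0 < t := by
    have h2a : (0:ℝ) < -2*a := by linarith
    rw [ht]; exact div_pos h2a hμ
  have hK0 : 0 ≤ K := by rw [hK]; positivity
  -- pointwise bound on |f² g|
  have h1 : ∀ x, |(f x)^2 * g x| ≤ (t*K*(f x)^2 + (g x)^2/t)/2 := by
    intro x
    have e1 : |(f x)^2 * g x| = (f x)^2 * |g x| := by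
      rw [abs_mul, abs_of_nonneg (sq_nonneg _)]
    have e2 := sq_nonneg (t * (f x) ^2 - |g x|)
    have e4 := sq_nonneg (f x)
    have e5 : |g x|^2 = (g x)^2 := sq_abs _
    have hkey : 2*t*((f x)^2 * |g x|) ≤ t^2*K*(f x)^2 + (g x)^2 := by
      nlinarith [hfK x, mul_le_mul_of_nonneg_left (hfK x) e4]
    rw [e1, ← mul_le_mul_iff_right₀ (show (0:ℝ) < 2*t by positivity)]
    have e6 : 2*t*((t*K*(f x)^2 + (g x)^2/t)/2) = t^2*K*(f x)^2 + (g x)^2 := by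
      field_simp
    rw [e6]; exact hkey
  have h2 : Integrable (fun x => (t*K*(f x)^2 + (g x)^2/t)/2) :=
    (((hif.const_mul (t*K)).add (hig.div_const t)).div_const 2)
  have h3 : ∫ x, |(f x)^2 * g x| ≤ (t*K*μf + μg/t)/2 := by
    calc ∫ x, |(f x)^2 * g x| ≤ ∫ x, (t*K*(f x)^2 + (g x)^2/t)/2 :=
          integral_mono hifg2.abs h2 h1
      _ = (t*K*μf + μg/t)/2 := by
          rw [integral_div, integral_add (hif.const_mul (t*K)) (hig.div_const t),
            integral_const_mul, integral_div]
  have h4 : -((t*K*μf + μg/t)/2) ≤ P := by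
    have hne := integral_mono hifg2.abs.neg hifg2
      (fun x => neg_abs_le ((f x)^2 * g x))
    simp only [Pi.neg_apply] at hne
    rw [integral_neg] at hne
    linarith
  -- bound on ∫ f g
  have h5 : ∀ x, |f x * g x| ≤ ((f x)^2 + (g x)^2)/2 := by
    intro x
    have := sq_nonneg (|f x| - |g x|)
    rw [abs_mul]
    nlinarith [sq_abs (f x), sq_abs (g x)]
  have h6 : -(μ/2) ≤ Q := by
    have h7 : ∫ x, |f x * g x| ≤ ((μf + μg))/2 := by
      calc ∫ x, |f x * g x| ≤ ∫ x, ((f x)^2 + (g x)^2)/2 :=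
            integral_mono hifg.abs ((hif.add hig).div_const 2) h5
        _ = (μf + μg)/2 := by rw [integral_div, integral_add hif hig]
    have hne := integral_mono hifg.abs.neg hifg (fun x => neg_abs_le (f x * g x))
    simp only [Pi.neg_apply] at hne
    rw [integral_neg] at hne
    linarith
  clear_value If Ig μf μg P Q K t
  clear h1 h2 hfK
  -- combine
  have hμfμ : μf ≤ μ := by linarith
  have hμgμ : μg ≤ μ := by linarith
  have e7 : t*K*μf ≤ t*K*μ :=
    mul_le_mul_of_nonneg_left hμfμ (mul_nonneg ht0.le hK0)
  have e8 : t*K*μ = (-2*a)*K := by rw [ht]; field_simp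
  have e9 : μg/t ≤ μ/t := by gcongr
  have e10 : μ/t = μ^2/(2*(-a)) := by rw [ht]; field_simp
  have hcIg : 0 ≤ -c * Ig := mul_nonneg (by linarith) hIg0
  have hP2 : a*K - μ^2/(4*(-a)) ≤ P := by
    have heq : -((( -2*a)*K + μ^2/(2*(-a)))/2) = a*K - μ^2/(4*(-a)) := by ring
    have hle : t*K*μf + μg/t ≤ (-2*a)*K + μ^2/(2*(-a)) := by linarith
    linarith [h4]
  have haK : a*K = a*μf + a*If := by rw [hK]; ring
  have haμ : a*μ ≤ a*μf := mul_le_mul_of_nonpos_left hμfμ ha.le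
  linarith [h6, hcIg, hP2]


lemma gauss_witness (b l : ℝ) (hb : 0 < b) (hl : 0 < l) :
    ∃ f f' g g' : ℝ → ℝ,
      ((∀ x, HasDerivAt f (f' x) x) ∧ (∀ x, HasDerivAt g (g' x) x) ∧
      Integrable (fun x => (f x)^2) ∧ Integrable (fun x => (f' x)^2) ∧
      Integrable (fun x => (g x)^2) ∧ Integrable (fun x => (g' x)^2) ∧
      Integrable (fun x => (f x)^2 * g x) ∧ Integrable (fun x => f x * g x)) ∧
      ((∫ x, (f x)^2) = b^2 * Real.sqrt (π/(2*l)) ∧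
      (∫ x, (g x)^2) = b^2 * Real.sqrt (π/(2*l)) ∧
      (∫ x, (f' x)^2) ≤ 4*l*b^2* Real.sqrt (π/l) ∧
      (∫ x, (g' x)^2) ≤ 4*l*b^2* Real.sqrt (π/l) ∧
      (∫ x, (f x)^2 * g x) = -(b^3 * Real.sqrt (π/(3*l))) ∧
      (∫ x, f x * g x) = -(b^2 * Real.sqrt (π/(2*l)))) := by
  set f : ℝ → ℝ := fun x => b * Real.exp (-(l*x^2)) with hf
  set f' : ℝ → ℝ := fun x => b * (Real.exp (-(l*x^2)) * (-(l*(2*x)))) with hf'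
  set g : ℝ → ℝ := fun x => -(f x) with hg
  set g' : ℝ → ℝ := fun x => -(f' x) with hg'
  have hderiv : ∀ x, HasDerivAt f (f' x) x := by
    intro x
    have h1 : HasDerivAt (fun x : ℝ => -(l*x^2)) (-(l*(2*x))) x := by
      simpa [Pi.neg_def] using ((hasDerivAt_pow 2 x).const_mul l).neg
    exact ((h1.exp).const_mul b)
  have hderivg : ∀ x, HasDerivAt g (g' x) x := fun x => (hderiv x).neg
  -- squared functions as gaussians
  have hsq : (fun x => (f x)^2) = fun x => b^2 * Real.exp (-(2*l) * x^2) := by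
    funext x
    have h0 : (f x)^2 = b^2 * (Real.exp (-(l*x^2)) * Real.exp (-(l*x^2))) := by
      rw [hf]; ring
    rw [h0, ← Real.exp_add]
    ring_nf
  have hgsq : (fun x => (g x)^2) = fun x => (f x)^2 := by
    funext x; rw [hg]; ring
  have hcube : (fun x => (f x)^2 * g x) = fun x => -(b^3 * Real.exp (-(3*l) * x^2)) := by
    funext x
    have h0 : (f x)^2 * g x = -(b^3 * (Real.exp (-(l*x^2)) * Real.exp (-(l*x^2)) * Real.exp (-(l*x^2)))) := by
      rw [hg, hf]; ring
    rw [h0, ← Real.exp_add, ← Real.exp_add]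
    ring_nf
  have hprod : (fun x => f x * g x) = fun x => -((f x)^2) := by
    funext x; rw [hg]; ring
  -- pointwise bound for derivative squared
  have hkey : ∀ x : ℝ, l * x^2 * Real.exp (-(l*x^2)) ≤ 1 := by
    intro x
    have h1 : l*x^2 ≤ Real.exp (l*x^2) := by
      nlinarith [Real.add_one_le_exp (l*x^2)]
    rw [Real.exp_neg, ← div_eq_mul_inv, div_le_one (Real.exp_pos _)]
    exact h1
  have hptw : ∀ x : ℝ, (f' x)^2 ≤ (4*l*b^2) * Real.exp (-l * x^2) := by
    intro x
    have hE : (0:ℝ) < Real.exp (-(l*x^2)) := Real.exp_pos _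
    have h2 : (f' x)^2 = 4*l*b^2 * (l*x^2*Real.exp (-(l*x^2))) * Real.exp (-(l*x^2)) := by
      rw [hf']; ring
    have h3 : (-l) * x^2 = -(l*x^2) := by ring
    rw [h2, h3]
    nlinarith [hE,
      mul_le_mul_of_nonneg_right
        (mul_le_mul_of_nonneg_left (hkey x) (show (0:ℝ) ≤ 4*l*b^2 by positivity)) hE.le]
  have hf'cont : Continuous f' := by
    rw [hf']
    exact continuous_const.mul ((Real.continuous_exp.comp (by continuity)).mul (by continuity))
  have hintf2 : Integrable (fun x => (f x)^2) := by
    rw [hsq]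
    exact (integrable_exp_neg_mul_sq (by positivity : (0:ℝ) < 2*l)).const_mul _
  have hintf'2 : Integrable (fun x => (f' x)^2) := by
    refine ((integrable_exp_neg_mul_sq hl).const_mul (4*l*b^2)).mono'
      ((hf'cont.pow 2).aestronglyMeasurable)
      (Filter.Eventually.of_forall fun x => ?_)
    rw [Real.norm_eq_abs, abs_of_nonneg (sq_nonneg _)]
    exact hptw x
  have hintg2 : Integrable (fun x => (g x)^2) := by rw [hgsq]; exact hintf2
  have hintg'2 : Integrable (fun x => (g' x)^2) := by
    have : (fun x => (g' x)^2) = fun x => (f' x)^2 := by funext x; rw [hg']; ring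
    rw [this]; exact hintf'2
  have hintf3 : Integrable (fun x => (f x)^2 * g x) := by
    rw [hcube]
    exact ((integrable_exp_neg_mul_sq (by positivity : (0:ℝ) < 3*l)).const_mul (b^3)).neg
  have hintfg : Integrable (fun x => f x * g x) := by
    rw [hprod]; exact hintf2.neg
  have hI1 : (∫ x, (f x)^2) = b^2 * Real.sqrt (π/(2*l)) := by
    rw [hsq, integral_const_mul, integral_gaussian]
  have hI2 : (∫ x, (g x)^2) = b^2 * Real.sqrt (π/(2*l)) := by
    rw [hgsq]; exact hI1
  have hI3 : (∫ x, (f' x)^2) ≤ 4*l*b^2* Real.sqrt (π/l) := by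
    calc ∫ x, (f' x)^2 ≤ ∫ x, (4*l*b^2) * Real.exp (-l * x^2) :=
          integral_mono hintf'2 ((integrable_exp_neg_mul_sq hl).const_mul _) hptw
      _ = 4*l*b^2 * Real.sqrt (π/l) := by rw [integral_const_mul, integral_gaussian]
  have hI4 : (∫ x, (g' x)^2) ≤ 4*l*b^2* Real.sqrt (π/l) := by
    have h5 : (fun x => (g' x)^2) = fun x => (f' x)^2 := by funext x; rw [hg']; ring
    rw [h5]; exact hI3
  have hI5 : (∫ x, (f x)^2 * g x) = -(b^3 * Real.sqrt (π/(3*l))) := by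
    rw [hcube, integral_neg, integral_const_mul, integral_gaussian]
  have hI6 : (∫ x, f x * g x) = -(b^2 * Real.sqrt (π/(2*l))) := by
    rw [hprod, integral_neg, hsq, integral_const_mul, integral_gaussian]
  exact ⟨f, f', g, g', ⟨hderiv, hderivg, hintf2, hintf'2, hintg2, hintg'2, hintf3, hintfg⟩,
    hI1, hI2, hI3, hI4, hI5, hI6⟩

set_option maxHeartbeats 1000000

/-- Upper bound for `m(μ) = inf{τ(f,g) : (f,g) ∈ X_μ}`: there is a constant `C > 0`
independent of `a, c, μ` such that for all `a, c < 0` and `μ > 0`,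
`m(μ) < -C μ^(5/3) / (|a|+|c|)^(1/3)`. -/
theorem stmt3 :
    ∃ C : ℝ, 0 < C ∧
      ∀ a c μ : ℝ, a < 0 → c < 0 → 0 < μ →
        sInf {t : ℝ | ∃ f f' g g' : ℝ → ℝ,
            (∀ x, HasDerivAt f (f' x) x) ∧
            (∀ x, HasDerivAt g (g' x) x) ∧
            Integrable (fun x => (f x) ^ 2) ∧
            Integrable (fun x => (f' x) ^ 2) ∧
            Integrable (fun x => (g x) ^ 2) ∧
            Integrable (fun x => (g' x) ^ 2) ∧
            Integrable (fun x => (f x) ^ 2 * g x) ∧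
            Integrable (fun x => f x * g x) ∧
            (∫ x, (f x) ^ 2) + (∫ x, (g x) ^ 2) = μ ∧
            t = -a * (∫ x, (f' x) ^ 2) - c * (∫ x, (g' x) ^ 2)
                + (∫ x, (f x) ^ 2 * g x) + 2 * (∫ x, f x * g x)}
          < -C * μ ^ ((5 : ℝ) / 3) / (|a| + |c|) ^ ((1 : ℝ) / 3) := by
  refine ⟨1/100, by norm_num, fun a c μ ha hc hμ => ?_⟩
  set S := {t : ℝ | ∃ f f' g g' : ℝ → ℝ,
            (∀ x, HasDerivAt f (f' x) x) ∧
            (∀ x, HasDerivAt g (g' x) x) ∧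
            Integrable (fun x => (f x) ^ 2) ∧
            Integrable (fun x => (f' x) ^ 2) ∧
            Integrable (fun x => (g x) ^ 2) ∧
            Integrable (fun x => (g' x) ^ 2) ∧
            Integrable (fun x => (f x) ^ 2 * g x) ∧
            Integrable (fun x => f x * g x) ∧
            (∫ x, (f x) ^ 2) + (∫ x, (g x) ^ 2) = μ ∧
            t = -a * (∫ x, (f' x) ^ 2) - c * (∫ x, (g' x) ^ 2)
                + (∫ x, (f x) ^ 2 * g x) + 2 * (∫ x, f x * g x)} with hS
  have hbdd : BddBelow S := by
    refine ⟨-((-a)*μ + μ^2/(4*(-a)) + μ), ?_⟩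
    rintro t ⟨f, f', g, g', hdf, hdg, h1, h2, h3, h4, h5, h6, hcon, rfl⟩
    exact tau_lower a c μ ha hc hμ f f' g g' hdf h1 h2 h3 h4 h5 h6 hcon
  -- parameters
  set K : ℝ := -a + -c with hK
  have hKpos : 0 < K := by rw [hK]; linarith
  set b : ℝ := (μ^2/(100*K)) ^ ((1:ℝ)/3) with hbdef
  have hx : (0:ℝ) < μ^2/(100*K) := by positivity
  have hbpos : 0 < b := Real.rpow_pos_of_pos hx _
  set l : ℝ := 2*π*b^4/μ^2 with hldef
  have hπ : (0:ℝ) < π := Real.pi_pos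
  have hlpos : 0 < l := by rw [hldef]; positivity
  have hb3 : b^3 = μ^2/(100*K) := by
    rw [hbdef, ← Real.rpow_natCast ((μ^2/(100*K)) ^ ((1:ℝ)/3)) 3,
      ← Real.rpow_mul hx.le]
    norm_num
  -- sqrt computations
  have hs1 : Real.sqrt (π/(2*l)) = μ/(2*b^2) := by
    have h0 : π/(2*l) = (μ/(2*b^2))^2 := by
      rw [hldef]; field_simp
    rw [h0, Real.sqrt_sq (by positivity)]
  have hs2 : μ/((5/2)*b^2) ≤ Real.sqrt (π/(3*l)) := by
    rw [show π/(3*l) = μ^2/(6*b^4) from by rw [hldef]; field_simp; ring]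
    have h0 : (μ/((5/2)*b^2))^2 ≤ μ^2/(6*b^4) := by
      rw [div_pow, show ((5/2:ℝ)*b^2)^2 = (25/4)*b^4 from by ring]
      apply div_le_div_of_nonneg_left (by positivity) (by positivity)
      exact mul_le_mul_of_nonneg_right (by norm_num) (pow_nonneg hbpos.le 4)
    calc μ/((5/2)*b^2) = Real.sqrt ((μ/((5/2)*b^2))^2) :=
          (Real.sqrt_sq (by positivity)).symm
      _ ≤ Real.sqrt (μ^2/(6*b^4)) := Real.sqrt_le_sqrt h0
  have hs3 : Real.sqrt (π/l) ≤ μ/((7/5)*b^2) := by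
    rw [show π/l = μ^2/(2*b^4) from by rw [hldef]; field_simp]
    have h0 : μ^2/(2*b^4) ≤ (μ/((7/5)*b^2))^2 := by
      rw [div_pow, show (((7/5):ℝ)*b^2)^2 = (49/25)*b^4 from by ring]
      apply div_le_div_of_nonneg_left (by positivity) (by positivity)
      exact mul_le_mul_of_nonneg_right (by norm_num) (pow_nonneg hbpos.le 4)
    calc Real.sqrt (μ^2/(2*b^4)) ≤ Real.sqrt ((μ/((7/5)*b^2))^2) := Real.sqrt_le_sqrt h0
      _ = μ/((7/5)*b^2) := Real.sqrt_sq (by positivity)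
  clear_value K b l
  -- witness
  obtain ⟨f, f', g, g', ⟨hdf, hdg, h1, h2, h3, h4, h5, h6⟩,
    hI1, hI2, hI3, hI4, hI5, hI6⟩ := gauss_witness b l hbpos hlpos
  set If := ∫ x, (f' x)^2 with hIfd
  set Ig := ∫ x, (g' x)^2 with hIgd
  set P := ∫ x, (f x)^2 * g x with hPd
  set QQ := ∫ x, f x * g x with hQd
  set μf := ∫ x, (f x)^2 with hμfd
  set μg := ∫ x, (g x)^2 with hμgd
  have hcon : μf + μg = μ := by
    rw [hI1, hI2, hs1]; field_simp; ring
  set t₀ : ℝ := -a * If - c * Ig + P + 2 * QQ with ht₀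
  have hmem : t₀ ∈ S := ⟨f, f', g, g', hdf, hdg, h1, h2, h3, h4, h5, h6, hcon, rfl⟩
  have hle : sInf S ≤ t₀ := csInf_le hbdd hmem
  clear_value S t₀ If Ig P QQ μf μg
  -- bound t₀
  have hJ : 4*l*b^2*Real.sqrt (π/l) ≤ 23*b^4/μ := by
    have h0 : 4*l*b^2*Real.sqrt (π/l) ≤ 4*l*b^2*(μ/((7/5)*b^2)) :=
      mul_le_mul_of_nonneg_left hs3 (by positivity)
    have h1' : 4*l*b^2*(μ/((7/5)*b^2)) = (8/(7/5))*π*b^4/μ := by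
      rw [hldef]; field_simp; ring
    have h2' : (8/(7/5))*π*b^4/μ ≤ 23*b^4/μ := by
      rw [div_le_div_iff₀ (by positivity) (by positivity)]
      have hp : (8/(7/5))*π ≤ 23 := by linarith [Real.pi_le_four]
      calc (8/(7/5))*π*b^4*μ = ((8/(7/5))*π)*(b^4*μ) := by ring
        _ ≤ 23*(b^4*μ) := mul_le_mul_of_nonneg_right hp (by positivity)
        _ = 23*b^4*μ := by ring
    linarith
  have hbf : -a * If ≤ (-a) * (23*b^4/μ) :=
    mul_le_mul_of_nonneg_left (le_trans hI3 hJ) (by linarith)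
  have hbg : -c * Ig ≤ (-c) * (23*b^4/μ) :=
    mul_le_mul_of_nonneg_left (le_trans hI4 hJ) (by linarith)
  have hP : P ≤ -(b^3 * (μ/((5/2)*b^2))) := by
    rw [hI5]
    have := mul_le_mul_of_nonneg_left hs2 (show (0:ℝ) ≤ b^3 by positivity)
    linarith
  have hQ : 2 * QQ = -μ := by
    rw [hI6, hs1]; field_simp
  have ht₀le : t₀ ≤ 23*K*b^4/μ - b*μ/(5/2) - μ := by
    have e1 : -(b^3 * (μ/((5/2)*b^2))) = -(b*μ/(5/2)) := by
      field_simp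
    have e2 : (-a) * (23*b^4/μ) + (-c) * (23*b^4/μ) = 23*K*b^4/μ := by
      rw [hK]; ring
    rw [ht₀]
    rw [hQ]
    linarith only [hbf, hbg, hP, e1, e2]
  have hb4 : K*b^4/μ = b*μ/100 := by
    have : b^4 = b * b^3 := by ring
    rw [this, hb3]
    field_simp
  have ht₀le2 : t₀ ≤ -((17/100)*(b*μ)) - μ := by
    have : 23*K*b^4/μ = 23*(b*μ)/100 := by
      rw [show 23*K*b^4/μ = 23*(K*b^4/μ) from by ring, hb4]; ring
    rw [this] at ht₀le
    linarith
  -- RHS comparison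
  have habs : |a| + |c| = K := by rw [hK, abs_of_neg ha, abs_of_neg hc]
  have h100 : ((100:ℝ)) ^ ((1:ℝ)/3) ≤ 5 := by
    have h5 : (5:ℝ) = ((125:ℝ)) ^ ((1:ℝ)/3) := by
      rw [show (125:ℝ) = 5^(3:ℕ) by norm_num, ← Real.rpow_natCast 5 3,
        ← Real.rpow_mul (by norm_num : (0:ℝ) ≤ 5)]
      norm_num
    rw [h5]
    exact Real.rpow_le_rpow (by norm_num) (by norm_num) (by norm_num)
  have h100pos : (0:ℝ) < ((100:ℝ)) ^ ((1:ℝ)/3) := Real.rpow_pos_of_pos (by norm_num) _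
  have hμ53 : μ ^ ((5:ℝ)/3) = b * μ * ((100:ℝ)) ^ ((1:ℝ)/3) * K ^ ((1:ℝ)/3) := by
    have e1 : μ ^ ((5:ℝ)/3) = (μ^2) ^ ((1:ℝ)/3) * μ := by
      have h2' : ((μ:ℝ)^2) ^ ((1:ℝ)/3) = μ ^ ((2:ℝ)/3) := by
        rw [← Real.rpow_natCast μ 2, ← Real.rpow_mul hμ.le]; norm_num
      have h3' := Real.rpow_add hμ ((2:ℝ)/3) 1
      rw [Real.rpow_one] at h3'
      rw [h2', show (5:ℝ)/3 = 2/3 + 1 by norm_num, h3']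
    have e2 : (μ^2) ^ ((1:ℝ)/3) = b * (100*K) ^ ((1:ℝ)/3) := by
      rw [hbdef, ← Real.mul_rpow (le_of_lt hx) (by positivity)]
      congr 1
      field_simp
    have e3 : (100*K) ^ ((1:ℝ)/3) = ((100:ℝ)) ^ ((1:ℝ)/3) * K ^ ((1:ℝ)/3) :=
      Real.mul_rpow (by norm_num) hKpos.le
    rw [e1, e2, e3]; ring
  have hK13 : (0:ℝ) < K ^ ((1:ℝ)/3) := Real.rpow_pos_of_pos hKpos _
  have hRHS : -(1/100) * μ ^ ((5:ℝ)/3) / (|a| + |c|) ^ ((1:ℝ)/3)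
      = -(((100:ℝ)) ^ ((1:ℝ)/3)/100) * (b*μ) := by
    rw [habs, hμ53]
    field_simp
  rw [hRHS]
  have hfinal : t₀ < -(((100:ℝ)) ^ ((1:ℝ)/3)/100) * (b*μ) := by
    have h1' : -(5/100) * (b*μ) ≤ -(((100:ℝ)) ^ ((1:ℝ)/3)/100) * (b*μ) := by
      have h2' := mul_le_mul_of_nonneg_right h100
        (show (0:ℝ) ≤ (b*μ)/100 by positivity)
      linarith only [h2']
    have hbμ : 0 < b*μ := mul_pos hbpos hμ
    calc t₀ ≤ -((17/100)*(b*μ)) - μ := ht₀le2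
      _ < -(5/100) * (b*μ) := by linarith
      _ ≤ -(((100:ℝ)) ^ ((1:ℝ)/3)/100) * (b*μ) := h1'
  linarith
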